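/- Let π(N) be the stable configuration of KSPM(D) reached by the iterated process of adding N grains one at a time on column 0 and stabilizing, and let s be any strategy from π(N)^{↓0} (π(N) with one grain added on column 0) to π(N+1). Then every column is fired at most once in s: for all i, |s|ᵢ ∈ {0,1}. -/

import Mathlib

/-- Effect of firing column `i` in KSPM(D), on height-difference configurations. -/
def step (D : ℕ) (σ : ℕ → ℕ) (i : ℕ) : ℕ → ℕ :=
  fun j =>
    if j = i then σ i - D
    else if j + 1 = i then σ j + (D - 1)
    else if j = i + D - 1 then σ j + 1
    else σ j

/-- Transition on column `i`: `σ →ᵢ σ'`. -/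
def KTrans (D : ℕ) (σ : ℕ → ℕ) (i : ℕ) (σ' : ℕ → ℕ) : Prop :=
  D ≤ σ i ∧ σ' = step D σ i

/-- A strategy (list of fired columns) is legal from `σ`. -/
def Legal (D : ℕ) : (ℕ → ℕ) → List ℕ → Prop
  | _, [] => True
  | σ, i :: s => D ≤ σ i ∧ Legal D (step D σ i) s

/-- Configuration obtained by applying a strategy. -/
def applyStrat (D : ℕ) : (ℕ → ℕ) → List ℕ → (ℕ → ℕ)
  | σ, [] => σ
  | σ, i :: s => applyStrat D (step D σ i) s

/-- Reachability `σ →* σ'`. -/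
def Reaches (D : ℕ) (σ σ' : ℕ → ℕ) : Prop :=
  ∃ s : List ℕ, Legal D σ s ∧ applyStrat D σ s = σ'

/-- A configuration is stable (a fixed point) if no transition is possible. -/
def Stable (D : ℕ) (σ : ℕ → ℕ) : Prop := ∀ i, σ i < D

/-- Initial configuration: `N` grains stacked on column 0 (height differences `(N,0,0,…)`). -/
def initConf (N : ℕ) : ℕ → ℕ := fun j => if j = 0 then N else 0

/-- `τ = π(N)`: the stable configuration reachable from `N` stacked grains. -/
def IsPi (D N : ℕ) (τ : ℕ → ℕ) : Prop := Reaches D (initConf N) τ ∧ Stable D τ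

/-- `σ^{↓0}`: add one grain on column 0. -/
def addGrain (σ : ℕ → ℕ) : ℕ → ℕ := Function.update σ 0 (σ 0 + 1)

/-- `s` is the leftmost (lexicographically minimal) strategy from `τ^{↓0}` to `τ'`. -/
def IsAvalancheFor (D : ℕ) (τ τ' : ℕ → ℕ) (s : List ℕ) : Prop :=
  Legal D (addGrain τ) s ∧ applyStrat D (addGrain τ) s = τ' ∧
    ∀ s' : List ℕ, Legal D (addGrain τ) s' → applyStrat D (addGrain τ) s' = τ' →
      ¬ List.Lex (· < ·) s' s

/-- `s` is the `k`-th avalanche: leftmost strategy from `π(k-1)^{↓0}` to `π(k)`. -/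
def IsAvalanche (D k : ℕ) (s : List ℕ) : Prop :=
  ∃ τ τ' : ℕ → ℕ, IsPi D (k - 1) τ ∧ IsPi D k τ' ∧ IsAvalancheFor D τ τ' s

/-- Position `t` (0-indexed) of strategy `s` is a peak: it exceeds all earlier fired columns. -/
def IsPeak (s : List ℕ) (t : ℕ) : Prop :=
  t < s.length ∧ ∀ t' < t, s.getD t' 0 < s.getD t 0

/-- Column `p` is a peak of `s`. -/
def IsPeakVal (s : List ℕ) (p : ℕ) : Prop :=
  ∃ t : ℕ, IsPeak s t ∧ s.getD t 0 = p


/-- Invariant: the firing counts `c` are 0/1 and the current configuration `σ`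
is determined by the stable start `τ` (plus one grain on column 0) and `c`. -/
def KSPMInv (D : ℕ) (τ σ c : ℕ → ℕ) : Prop :=
  (∀ j, c j ≤ 1) ∧
  ∀ j, σ j + (if c j = 0 then 0 else D) =
    τ j + (if j = 0 then 1 else 0) + (if c (j + 1) = 0 then 0 else D - 1) +
      (if D ≤ j + 1 then c (j + 1 - D) else 0)

/-- A column that can legally fire has not been fired before. -/
lemma fired_zero (D : ℕ) (τ σ c : ℕ → ℕ) (a : ℕ) (hD : 2 ≤ D)
    (hτ : ∀ j, τ j < D) (hInv : KSPMInv D τ σ c) (ha : D ≤ σ a) : c a = 0 := by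
  have g := hInv.2 a
  have b2 := hInv.1 (a + 1)
  have b3 := hInv.1 (a + 1 - D)
  have ht := hτ a
  by_cases h0 : a = 0
  · subst h0
    rw [if_neg (by omega : ¬ D ≤ 0 + 1)] at g
    split_ifs at g <;> omega
  · split_ifs at g <;> omega

/-- The invariant is preserved by a legal firing. -/
lemma inv_step (D : ℕ) (τ σ c : ℕ → ℕ) (a : ℕ) (hD : 2 ≤ D)
    (hτ : ∀ j, τ j < D) (hInv : KSPMInv D τ σ c) (ha : D ≤ σ a) :
    KSPMInv D τ (step D σ a) (fun j => if j = a then 1 else c j) := by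
  have hca := fired_zero D τ σ c a hD hτ hInv ha
  constructor
  · intro j; dsimp only; split
    · exact le_refl 1
    · exact hInv.1 j
  · intro j
    have g := hInv.2 j
    have b1 := hInv.1 j
    have b2 := hInv.1 (j + 1)
    have b3 := hInv.1 (j + 1 - D)
    dsimp only
    simp only [step]
    by_cases h1 : j = a
    · subst h1
      split_ifs at g ⊢ <;> first | omega | contradiction
    · by_cases h2 : j + 1 = a
      · subst h2
        split_ifs at g ⊢ <;> first | omega | contradiction
      · by_cases h3 : j = a + D - 1
        · have e : j + 1 - D = a := by omega
          have hg : D ≤ j + 1 := by omega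
          rw [e] at g b3
          split_ifs at g ⊢ <;> first | omega | contradiction
        · split_ifs at g ⊢ <;> first | omega | contradiction

/-- Key lemma: along any legal strategy from a configuration satisfying the
invariant, each column is fired at most once (counting previous firings). -/
lemma key_count (D : ℕ) (hD : 2 ≤ D) (τ : ℕ → ℕ) (hτ : ∀ j, τ j < D) :
    ∀ (s : List ℕ) (σ c : ℕ → ℕ), KSPMInv D τ σ c → Legal D σ s →
      ∀ i, c i + s.count i ≤ 1 := by
  intro s
  induction s with
  | nil => intro σ c hInv _ i; simpa using hInv.1 i
  | cons a s ih =>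
    intro σ c hInv hleg i
    obtain ⟨ha, hleg'⟩ := hleg
    have hca := fired_zero D τ σ c a hD hτ hInv ha
    have hInv' := inv_step D τ σ c a hD hτ hInv ha
    have hrec := ih (step D σ a) (fun j => if j = a then 1 else c j) hInv' hleg' i
    by_cases hi : i = a
    · subst hi
      rw [List.count_cons_self]
      simp at hrec
      omega
    · rw [List.count_cons_of_ne (Ne.symm hi)]
      simp only [if_neg hi] at hrec
      omega

/-- In any strategy from π(N) with one grain added on column 0 to π(N+1), each column is
fired at most once. -/
theorem fired_at_most_once (D N : ℕ) (hD : 2 ≤ D) (τ τ' : ℕ → ℕ)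
    (hτ : IsPi D N τ) (hτ' : IsPi D (N + 1) τ') (s : List ℕ)
    (hleg : Legal D (addGrain τ) s) (happ : applyStrat D (addGrain τ) s = τ') :
    ∀ i : ℕ, s.count i ≤ 1 := by
  intro i
  have hstable : ∀ j, τ j < D := hτ.2
  have hInv0 : KSPMInv D τ (addGrain τ) (fun _ => 0) := by
    refine ⟨fun j => Nat.zero_le 1, fun j => ?_⟩
    by_cases hj : j = 0 <;> simp [hj, addGrain, Function.update_apply]
  have := key_count D hD τ hstable s (addGrain τ) (fun _ => 0) hInv0 hleg i
  simpa using this
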